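/- Let (I, J) be a pair of distinct-element sequences of length s in [n]. Then there exists a decomposition of (I, J), i.e., pairwise disjoint sets A₁, …, A_t ⊆ [s] such that each (I_{A_j}, J_{A_j}) is a minimal equal sub-pair and the complement B = [s] \ (A₁ ∪ ⋯ ∪ A_t) is free of equalities; moreover this decomposition is unique up to reordering of the sets A_j. -/

import Mathlib

/-- `(I_A, J_A)` is a minimal equal sub-pair of `(I, J)`. -/
def MinimalEqualSubPair {n s : ℕ} (I J : Fin s → Fin n) (A : Finset (Fin s)) : Prop :=
  A.Nonempty ∧ A.image I = A.image J ∧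
    ∀ A' ⊂ A, A'.Nonempty → A'.image I ≠ A'.image J

/-- `(I_B, J_B)` is free of equalities: `I_A ≠ J_A` as sets for every nonempty `A ⊆ B`. -/
def FreeOfEqualities {n s : ℕ} (I J : Fin s → Fin n) (B : Finset (Fin s)) : Prop :=
  ∀ A ⊆ B, A.Nonempty → A.image I ≠ A.image J

/-- Every pair of distinct-element sequences admits a decomposition into pairwise disjoint
minimal equal sub-pairs together with a remainder that is free of equalities, and this
decomposition is unique (up to reordering, i.e. as a set of index sets). -/
theorem stmt4 {n s : ℕ} (I J : Fin s → Fin n)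
    (hI : Function.Injective I) (hJ : Function.Injective J) :
    ∃! 𝒜 : Finset (Finset (Fin s)),
      (∀ A ∈ 𝒜, MinimalEqualSubPair I J A) ∧
      ((𝒜 : Set (Finset (Fin s))).Pairwise fun A B => Disjoint A B) ∧
      FreeOfEqualities I J (Finset.univ \ 𝒜.sup id) := by
  classical
  set 𝒜 : Finset (Finset (Fin s)) :=
    Finset.univ.filter (fun A => MinimalEqualSubPair I J A) with h𝒜
  have mem𝒜 : ∀ A, A ∈ 𝒜 ↔ MinimalEqualSubPair I J A := by
    intro A; simp [h𝒜]
  -- intersections of equal sets are equal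
  have inter_eq : ∀ A B : Finset (Fin s), A.image I = A.image J →
      B.image I = B.image J → (A ∩ B).image I = (A ∩ B).image J := by
    intro A B hA hB
    rw [Finset.image_inter _ _ hI, Finset.image_inter _ _ hJ, hA, hB]
  -- every nonempty equal set contains a minimal equal subset
  have exists_min : ∀ A : Finset (Fin s), A.Nonempty → A.image I = A.image J →
      ∃ C ⊆ A, MinimalEqualSubPair I J C := by
    intro A
    induction A using Finset.strongInduction with
    | _ A ih =>
      intro hne heq
      by_cases h : ∀ A' ⊂ A, A'.Nonempty → A'.image I ≠ A'.image J
      · exact ⟨A, subset_rfl, hne, heq, h⟩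
      · push_neg at h
        obtain ⟨A', hsub, hne', heq'⟩ := h
        obtain ⟨C, hC, hCm⟩ := ih A' hsub hne' heq'
        exact ⟨C, hC.trans hsub.subset, hCm⟩
  -- a nonempty equal subset of a minimal equal set is the whole set
  have min_eq_of_subset : ∀ A C : Finset (Fin s), MinimalEqualSubPair I J A →
      C ⊆ A → C.Nonempty → C.image I = C.image J → C = A := by
    intro A C hA hsub hne heq
    by_contra h
    exact hA.2.2 C (hsub.ssubset_of_ne h) hne heq
  refine ⟨𝒜, ⟨fun A hA => (mem𝒜 A).1 hA, ?_, ?_⟩, ?_⟩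
  · -- pairwise disjoint
    intro A hA B hB hne
    rw [Finset.mem_coe, mem𝒜] at hA
    rw [Finset.mem_coe, mem𝒜] at hB
    by_contra hndisj
    rw [Finset.not_disjoint_iff_nonempty_inter] at hndisj
    have hinter := inter_eq A B hA.2.1 hB.2.1
    have h1 : A ∩ B = A := min_eq_of_subset A (A ∩ B) hA Finset.inter_subset_left hndisj hinter
    have h2 : A ∩ B = B := min_eq_of_subset B (A ∩ B) hB Finset.inter_subset_right hndisj hinter
    exact hne (h1 ▸ h2)
  · -- free of equalities
    intro A hsub hne heq
    obtain ⟨C, hCA, hCm⟩ := exists_min A hne heq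
    have hC𝒜 : C ∈ 𝒜 := (mem𝒜 C).2 hCm
    obtain ⟨x, hx⟩ := hCm.1
    have hxA : x ∈ A := hCA hx
    have := hsub hxA
    rw [Finset.mem_sdiff] at this
    exact this.2 (Finset.mem_sup.2 ⟨C, hC𝒜, hx⟩)
  · -- uniqueness
    intro ℬ ⟨hmin, hdisj, hfree⟩
    apply Finset.Subset.antisymm
    · intro A hA
      exact (mem𝒜 A).2 (hmin A hA)
    · intro A hA
      rw [mem𝒜] at hA
      -- A must meet some member of ℬ
      by_cases h : ∃ B ∈ ℬ, (A ∩ B).Nonempty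
      · obtain ⟨B, hB, hne⟩ := h
        have hBm := hmin B hB
        have hinter := inter_eq A B hA.2.1 hBm.2.1
        have h1 : A ∩ B = A := min_eq_of_subset A (A ∩ B) hA Finset.inter_subset_left hne hinter
        have h2 : A ∩ B = B := min_eq_of_subset B (A ∩ B) hBm Finset.inter_subset_right hne hinter
        exact (h1.symm.trans h2) ▸ hB
      · push_neg at h
        exfalso
        apply hfree A ?_ hA.1 hA.2.1
        intro x hx
        rw [Finset.mem_sdiff]
        refine ⟨Finset.mem_univ x, fun hxs => ?_⟩
        obtain ⟨B, hB, hxB⟩ := Finset.mem_sup.1 hxs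
        exact (Finset.not_nonempty_iff_eq_empty.2 (h B hB)) ⟨x, Finset.mem_inter.2 ⟨hx, hxB⟩⟩
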